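/- The limit closure of the reachability set of a VAS V = (A, δ, x_in) equals the set of vectors of the form x_in + δ(v) + ω·δ(π), where v ∈ A* and π is a productive sequence in V for v. -/

import Mathlib

/-- Vectors over `ℕ∞ = ℕ ∪ {ω}`. -/
abbrev Vec (d : ℕ) := Fin d → ℕ∞

/-- A sequence in `ℕ∞` converges to `l` if it is ultimately constant equal to `l`,
or its integer values form an infinite subsequence tending to infinity and `l = ω`. -/
def ConvTo (s : ℕ → ℕ∞) (l : ℕ∞) : Prop :=
  (∃ N, ∀ n ≥ N, s n = l) ∨
  (l = ⊤ ∧ {n | s n ≠ ⊤}.Infinite ∧ ∀ B : ℕ, ∃ N, ∀ n ≥ N, (B : ℕ∞) ≤ s n)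

/-- Componentwise convergence of a sequence of vectors. -/
def VConvTo {d : ℕ} (s : ℕ → Vec d) (x : Vec d) : Prop :=
  ∀ i, ConvTo (fun n => s n i) (x i)

/-- The limit closure: the set of limits of convergent sequences of elements of `M`. -/
def LimCl {d : ℕ} (M : Set (Vec d)) : Set (Vec d) :=
  {x | ∃ s : ℕ → Vec d, (∀ n, s n ∈ M) ∧ VConvTo s x}

/-- Downward closure for the pointwise order on `ℕ∞^d`. -/
def dc {d : ℕ} (M : Set (Vec d)) : Set (Vec d) := {x | ∃ y ∈ M, x ≤ y}

/-- The copy of `ℕ^d` inside `ℕ∞^d`. -/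
def FinVec (d : ℕ) : Set (Vec d) := {x | ∀ i, x i ≠ ⊤}

/-- The embedding of `ℕ^d` into `ℕ∞^d`. -/
def toOmega {d : ℕ} (x : Fin d → ℕ) : Vec d := fun i => (x i : ℕ∞)

/-- A vector addition system of dimension `d` over alphabet `α`. -/
structure VAS (α : Type) (d : ℕ) where
  δ : α → Fin d → ℤ
  init : Fin d → ℕ

/-- Displacement of a word: `δ` extended to a monoid morphism on words. -/
def wordδ {α : Type} {d : ℕ} (V : VAS α d) (w : List α) : Fin d → ℤ :=
  (w.map V.δ).sum

/-- A word is fireable from `x` if every intermediate state is nonnegative. -/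
def Fireable {α : Type} {d : ℕ} (V : VAS α d) (x : Fin d → ℕ) (w : List α) : Prop :=
  ∀ p, p <+: w → ∀ i, 0 ≤ (x i : ℤ) + wordδ V p i

/-- The reachability set of the VAS `V`. -/
def PostStar {α : Type} {d : ℕ} (V : VAS α d) : Set (Fin d → ℕ) :=
  {y | ∃ w : List α, Fireable V V.init w ∧ ∀ i, (y i : ℤ) = V.init i + wordδ V w i}

/-- The word `u_0^n a_1 u_1^n ⋯ a_k u_k^n`. -/
def iterWord {α : Type} {k : ℕ} (u : Fin (k+1) → List α) (a : Fin k → α) (n : ℕ) : List α :=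
  (List.replicate n (u 0)).flatten ++
    (List.ofFn fun i : Fin k => a i :: (List.replicate n (u i.succ)).flatten).flatten

/-- `π = (u_0, …, u_k)` is productive for `v = a_1 ⋯ a_k`. -/
def Productive {α : Type} {d : ℕ} (V : VAS α d) {k : ℕ}
    (u : Fin (k+1) → List α) (a : Fin k → α) : Prop :=
  ∀ n ≥ 1, Fireable V V.init (iterWord u a n)

section Part1
variable {α : Type} {d : ℕ} (V : VAS α d)

theorem wordδ_nil (i : Fin d) : wordδ V ([] : List α) i = 0 := rfl

theorem wordδ_cons (a : α) (w : List α) (i : Fin d) :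
    wordδ V (a :: w) i = V.δ a i + wordδ V w i := by
  simp [wordδ, List.sum_cons]

theorem wordδ_append (s t : List α) (i : Fin d) :
    wordδ V (s ++ t) i = wordδ V s i + wordδ V t i := by
  simp [wordδ, List.sum_append]

theorem wordδ_singleton (a : α) (i : Fin d) : wordδ V [a] i = V.δ a i := by
  simp [wordδ_cons, wordδ_nil]

theorem wordδ_eq_sum_get (w : List α) (i : Fin d) :
    wordδ V w i = ∑ j : Fin w.length, V.δ (w.get j) i := by
  induction w with
  | nil => simp [wordδ_nil]
  | cons a w ih =>
    rw [wordδ_cons, ih]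
    exact (Fin.sum_univ_succ (fun j : Fin (w.length+1) => V.δ ((a::w).get j) i)).symm

/-- Integer-state fireability. -/
def IFire (z : Fin d → ℤ) (w : List α) : Prop :=
  ∀ p, p <+: w → ∀ i, 0 ≤ z i + wordδ V p i

theorem fireable_iff_iFire (x : Fin d → ℕ) (w : List α) :
    Fireable V x w ↔ IFire V (fun i => (x i : ℤ)) w := Iff.rfl

theorem IFire.nonneg {z : Fin d → ℤ} {w : List α} (h : IFire V z w) (i : Fin d) : 0 ≤ z i := by
  have := h [] (by simp) i
  simpa [wordδ_nil] using this

theorem IFire.mono {z z' : Fin d → ℤ} {w : List α} (h : IFire V z w)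
    (hz : ∀ i, z i ≤ z' i) : IFire V z' w := by
  intro p hp i
  have := h p hp i
  have := hz i
  omega

theorem iFire_append {z : Fin d → ℤ} {s t : List α} :
    IFire V z (s ++ t) ↔ IFire V z s ∧ IFire V (fun i => z i + wordδ V s i) t := by
  constructor
  · intro h
    refine ⟨fun p hp i => h p (hp.trans (List.prefix_append s t)) i, fun p hp i => ?_⟩
    have := h (s ++ p) ((List.prefix_append_right_inj s).2 hp) i
    rw [wordδ_append] at this
    dsimp only at this ⊢
    omega
  · rintro ⟨h1, h2⟩ p hp i
    rcases List.prefix_or_prefix_of_prefix hp (List.prefix_append s t) with h | h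
    · exact h1 p h i
    · obtain ⟨q, rfl⟩ := h
      have := h2 q ((List.prefix_append_right_inj s).1 hp) i
      rw [wordδ_append]
      dsimp only at this ⊢
      omega

theorem iFire_cons {z : Fin d → ℤ} {a : α} {t : List α} :
    IFire V z (a :: t) ↔ (∀ i, 0 ≤ z i) ∧ IFire V (fun i => z i + V.δ a i) t := by
  have : a :: t = [a] ++ t := rfl
  rw [this, iFire_append]
  constructor
  · rintro ⟨h1, h2⟩
    exact ⟨h1.nonneg _, h2.mono _ (fun i => by rw [wordδ_singleton])⟩
  · rintro ⟨h1, h2⟩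
    refine ⟨?_, h2.mono _ (fun i => by rw [wordδ_singleton])⟩
    intro p hp i
    rcases List.prefix_cons_iff.1 hp with h | ⟨q, rfl, hq⟩
    · subst h; simpa [wordδ_nil] using h1 i
    · rw [List.prefix_nil] at hq
      subst hq
      have := h2.nonneg _ i
      simp only [wordδ_singleton] at this ⊢
      simpa [wordδ_cons, wordδ_nil] using this

end Part1

section Part2
variable {α : Type} {d : ℕ} (V : VAS α d)

theorem flatten_replicate_one (w : List α) : (List.replicate 1 w).flatten = w := by
  simp

theorem flatten_replicate_succ (n : ℕ) (w : List α) :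
    (List.replicate (n+1) w).flatten = w ++ (List.replicate n w).flatten := by
  rw [List.replicate_succ, List.flatten_cons]

theorem wordδ_flatten_replicate (n : ℕ) (w : List α) (i : Fin d) :
    wordδ V ((List.replicate n w).flatten) i = n * wordδ V w i := by
  induction n with
  | zero => simp [wordδ_nil]
  | succ n ih =>
    rw [flatten_replicate_succ, wordδ_append, ih]
    push_cast
    ring

theorem repFire {z S : Fin d → ℤ} {w : List α} (hz : IFire V z w)
    (hS : ∀ i, 0 ≤ S i) (hS' : ∀ i, 0 ≤ S i + wordδ V w i) :
    ∀ n : ℕ, IFire V (fun i => z i + n * S i) ((List.replicate (n+1) w).flatten) := by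
  intro n
  induction n with
  | zero =>
    rw [flatten_replicate_one]
    exact hz.mono _ (fun i => by simp)
  | succ n ih =>
    rw [flatten_replicate_succ]
    rw [iFire_append]
    constructor
    · apply hz.mono
      intro i
      have := hS i
      have hn : (0:ℤ) ≤ (n:ℤ) + 1 := by positivity
      nlinarith
    · apply ih.mono
      intro i
      have h1 := hS' i
      push_cast
      nlinarith

/-- The body `a_1 u_1^n a_2 u_2^n ⋯` of the iterated word. -/
def bodyW (L : List (α × List α)) (n : ℕ) : List α :=
  (L.map fun p => p.1 :: (List.replicate n p.2).flatten).flatten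

/-- All partial sums (starting from `S`) of the displacements of the second components
are nonnegative. -/
def allS : (Fin d → ℤ) → List (α × List α) → Prop
  | S, [] => ∀ i, 0 ≤ S i
  | S, p :: L => (∀ i, 0 ≤ S i) ∧ allS (fun i => S i + wordδ V p.2 i) L

theorem allS_congr {S S' : Fin d → ℤ} (h : ∀ i, S i = S' i) :
    ∀ {L : List (α × List α)}, allS V S L → allS V S' L := by
  intro L
  induction L generalizing S S' with
  | nil => intro hS i; rw [← h i]; exact hS i
  | cons p L ih =>
    rintro ⟨h1, h2⟩
    exact ⟨fun i => h i ▸ h1 i, ih (fun i => by rw [h i]) h2⟩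

theorem allS_head {S : Fin d → ℤ} {L : List (α × List α)} (h : allS V S L) :
    ∀ i, 0 ≤ S i := by
  cases L with
  | nil => exact h
  | cons p L => exact h.1

theorem bodyFire : ∀ (L : List (α × List α)) (z S : Fin d → ℤ) (n : ℕ),
    IFire V z (bodyW L 1) → (∀ i, 0 ≤ S i) → allS V S L →
    IFire V (fun i => z i + n * S i) (bodyW L (n+1)) := by
  intro L
  induction L with
  | nil =>
    intro z S n hz hS _
    intro p hp i
    have hp' : p = [] := List.prefix_nil.1 (by simpa [bodyW] using hp)
    subst hp'
    have h1 := hz.nonneg _ i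
    have h2 := hS i
    simp only [wordδ_nil]
    have hn : (0:ℤ) ≤ (n:ℤ) := by positivity
    nlinarith
  | cons p L ih =>
    rintro z S n hz hS ⟨_, hSL⟩
    have hbody : ∀ m, bodyW (p :: L) m = p.1 :: ((List.replicate m p.2).flatten ++ bodyW L m) := by
      intro m
      simp [bodyW]
    rw [hbody] at hz
    rw [hbody]
    rw [iFire_cons] at hz ⊢
    obtain ⟨hz0, hz1⟩ := hz
    rw [iFire_append] at hz1
    obtain ⟨hzw, hzrest⟩ := hz1
    rw [flatten_replicate_one] at hzw hzrest
    have hS' : ∀ i, 0 ≤ S i + wordδ V p.2 i := allS_head V hSL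
    constructor
    · intro i
      have := hz0 i
      have := hS i
      have hn : (0:ℤ) ≤ (n:ℤ) := by positivity
      nlinarith
    · rw [iFire_append]
      constructor
      · apply (repFire V hzw hS hS' n).mono
        intro i
        omega
      · have := ih (fun i => z i + V.δ p.1 i + wordδ V p.2 i)
          (fun i => S i + wordδ V p.2 i) n hzrest hS' hSL
        apply this.mono
        intro i
        rw [wordδ_flatten_replicate]
        push_cast
        ring_nf
        omega

/-- `iterWord` written with list data. -/
theorem iterWord_eq_list (u0 : List α) (L : List (α × List α)) (n : ℕ) :
    iterWord (Fin.cases u0 (fun j => (L.get j).2)) (fun j => (L.get j).1) n =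
      (List.replicate n u0).flatten ++ bodyW L n := by
  unfold iterWord bodyW
  congr 1
  have h2 : List.map (fun p : α × List α => p.1 :: (List.replicate n p.2).flatten) L
      = List.map (fun p : α × List α => p.1 :: (List.replicate n p.2).flatten) (List.ofFn L.get) := by
    rw [List.ofFn_get]
  rw [h2, List.map_ofFn]
  congr 1

theorem productive_of_list (u0 : List α) (L : List (α × List α))
    (h1 : Fireable V V.init ((List.replicate 1 u0).flatten ++ bodyW L 1))
    (hS : allS V (fun i => wordδ V u0 i) L) :
    Productive V (Fin.cases u0 (fun j => (L.get j).2)) (fun j => (L.get j).1) := by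
  intro n hn
  rw [fireable_iff_iFire]
  rw [iterWord_eq_list]
  obtain ⟨m, rfl⟩ : ∃ m, n = m + 1 := ⟨n - 1, by omega⟩
  rw [fireable_iff_iFire, iFire_append, flatten_replicate_one] at h1
  obtain ⟨hu0, hbody⟩ := h1
  have hδu0 : ∀ i, 0 ≤ wordδ V u0 i := allS_head V hS
  rw [iFire_append]
  constructor
  · have := repFire V hu0 (S := fun _ => 0) (by simp) (by simpa using hδu0) m
    apply this.mono
    intro i
    omega
  · have := bodyFire V L (fun i => (V.init i : ℤ) + wordδ V u0 i) (fun i => wordδ V u0 i) m hbody hδu0 hS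
    apply this.mono
    intro i
    rw [wordδ_flatten_replicate]
    push_cast
    ring_nf
    omega

/-- Displacement of the iterated word. -/
theorem wordδ_iterWord {k : ℕ} (u : Fin (k+1) → List α) (a : Fin k → α) (n : ℕ) (i : Fin d) :
    wordδ V (iterWord u a n) i =
      n * (∑ l : Fin (k+1), wordδ V (u l) i) + ∑ j : Fin k, V.δ (a j) i := by
  unfold iterWord
  rw [wordδ_append, wordδ_flatten_replicate]
  have key : wordδ V ((List.ofFn fun i : Fin k => a i :: (List.replicate n (u i.succ)).flatten).flatten) i
      = ∑ j : Fin k, (V.δ (a j) i + n * wordδ V (u j.succ) i) := by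
    induction k with
    | zero => simp [wordδ_nil]
    | succ k ih =>
      rw [List.ofFn_succ, List.flatten_cons, wordδ_append, wordδ_cons,
        wordδ_flatten_replicate, ih (fun l => u l.succ) (fun j => a j.succ), Fin.sum_univ_succ]
  rw [key, Finset.sum_add_distrib, ← Finset.mul_sum, Fin.sum_univ_succ]
  ring

end Part2

section Part3
open List in
private theorem _sublist_parse_test {β : Type} (l : List β) : l <+ l := List.Sublist.refl l

variable {α : Type} {d : ℕ} (V : VAS α d)

/-- State (as naturals) reached after firing the first `j+1` letters of `w`. -/
def post (w : List α) (j : ℕ) : Fin d → ℕ :=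
  fun i => ((V.init i : ℤ) + wordδ V (w.take (j+1)) i).toNat

/-- The run annotated with the states reached after each letter. -/
def annot (w : List α) : List (α × (Fin d → ℕ)) :=
  List.ofFn fun j : Fin w.length => (w.get j, post V w j)

theorem annot_map_fst (w : List α) : (annot V w).map Prod.fst = w := by
  rw [annot, List.map_ofFn]
  have : (Prod.fst ∘ fun j : Fin w.length => (w.get j, post V w j)) = w.get := rfl
  rw [this, List.ofFn_get]

theorem post_cast {w : List α} (hf : Fireable V V.init w) {j : ℕ} (hj : j < w.length)
    (i : Fin d) : ((post V w j i : ℤ)) = (V.init i : ℤ) + wordδ V (w.take (j+1)) i := by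
  apply Int.toNat_of_nonneg
  exact hf (w.take (j+1)) (List.take_prefix _ _) i

/-- The annotation is coherent: an element of `annot` preceded by the part `q`
carries the state reached after firing `(q.map Prod.fst) ++ [e.1]`. -/
theorem ann_elem {w : List α} (hf : Fireable V V.init w)
    {q : List (α × (Fin d → ℕ))} {e : α × (Fin d → ℕ)} {rest : List (α × (Fin d → ℕ))}
    (h : annot V w = q ++ e :: rest) (i : Fin d) :
    ((e.2 i : ℤ)) = (V.init i : ℤ) + wordδ V (q.map Prod.fst) i + V.δ e.1 i := by
  have hlen : q.length < w.length := by
    have := congrArg List.length h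
    simp [annot] at this
    omega
  have hlen' : q.length < (annot V w).length := by
    rw [h]; simp
  have hd : (annot V w).drop q.length = e :: rest := by rw [h, List.drop_left]
  have hgefst : (annot V w)[q.length]'hlen' = e := by
    rw [List.drop_eq_getElem_cons hlen'] at hd
    exact (List.cons_eq_cons.1 hd).1
  have he' : e = (w.get ⟨q.length, hlen⟩, post V w q.length) := by
    rw [← hgefst]
    have hann : annot V w = List.ofFn fun j : Fin w.length => (w.get j, post V w j) := rfl
    simp only [hann]
    rw [List.getElem_ofFn]
  have hq : q.map Prod.fst = w.take q.length := by
    have h1 : q = (annot V w).take q.length := by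
      rw [h, List.take_left]
    conv_lhs => rw [h1]
    rw [List.map_take, annot_map_fst]
  have htake : w.take (q.length + 1) = (w.take q.length).concat (w.get ⟨q.length, hlen⟩) := by
    rw [← List.take_concat_get]
    rfl
  rw [he']
  dsimp only
  rw [post_cast V hf hlen, htake, List.concat_eq_append, wordδ_append, wordδ_singleton, hq]
  ring

/-- Decomposing a supersequence along an embedded sublist. -/
theorem subl_decomp {β : Type*} : ∀ {l' l₂ : List β}, List.Sublist l' l₂ →
    ∃ (u0 : List β) (Q : List (β × List β)),
      l₂ = u0 ++ (Q.map fun pr => pr.1 :: pr.2).flatten ∧ Q.map Prod.fst = l' := by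
  intro l' l₂ h
  induction h with
  | slnil => exact ⟨[], [], by simp, by simp⟩
  | cons b h ih =>
    obtain ⟨u0, Q, h1, h2⟩ := ih
    exact ⟨b :: u0, Q, by simp [h1], h2⟩
  | cons_cons b h ih =>
    obtain ⟨u0, Q, h1, h2⟩ := ih
    refine ⟨[], (b, u0) :: Q, ?_, by simp [h2]⟩
    simp [h1]

theorem decomp {β : Type*} {r : β → β → Prop} {l₁ l₂ : List β}
    (h : List.SublistForall₂ r l₁ l₂) :
    ∃ (u0 : List β) (Q : List (β × List β)),
      l₂ = u0 ++ (Q.map fun pr => pr.1 :: pr.2).flatten ∧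
      List.Forall₂ (fun x pr => r x pr.1) l₁ Q := by
  obtain ⟨l', hall, hsub⟩ := List.sublistForall₂_iff.1 h
  obtain ⟨u0, Q, h1, h2⟩ := subl_decomp hsub
  refine ⟨u0, Q, h1, ?_⟩
  rw [← h2] at hall
  exact List.forall₂_map_right_iff.1 hall

/-- The matching relation used for Higman's lemma. -/
def rel : (α × (Fin d → ℕ)) → (α × (Fin d → ℕ)) → Prop :=
  fun p q => p.1 = q.1 ∧ p.2 ≤ q.2

/-- The key extraction: partial sums of the inserted factors are nonnegative. -/
theorem allS_aux {w₁ w₂ : List α} (hf₁ : Fireable V V.init w₁) (hf₂ : Fireable V V.init w₂)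
    (hend : ∀ i, wordδ V w₁ i ≤ wordδ V w₂ i) :
    ∀ (Q : List ((α × (Fin d → ℕ)) × List (α × (Fin d → ℕ))))
      (l₁ P₁ P₂ : List (α × (Fin d → ℕ))),
      List.Forall₂ (fun x pr => rel x pr.1) l₁ Q →
      annot V w₁ = P₁ ++ l₁ →
      annot V w₂ = P₂ ++ (Q.map fun pr => pr.1 :: pr.2).flatten →
      allS V (fun i => wordδ V (P₂.map Prod.fst) i - wordδ V (P₁.map Prod.fst) i)
        (Q.map fun pr => (pr.1.1, pr.2.map Prod.fst)) := by
  intro Q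
  induction Q with
  | nil =>
    intro l₁ P₁ P₂ hfa h₁ h₂ i
    rw [List.forall₂_nil_right_iff] at hfa
    subst hfa
    rw [List.append_nil] at h₁
    simp only [List.map_nil, List.flatten_nil, List.append_nil] at h₂
    subst h₁
    subst h₂
    rw [annot_map_fst, annot_map_fst]
    show (0:ℤ) ≤ wordδ V w₂ i - wordδ V w₁ i
    have := hend i
    omega
  | cons q Q ih =>
    intro l₁ P₁ P₂ hfa h₁ h₂
    rw [List.forall₂_cons_right_iff] at hfa
    obtain ⟨x, l₁', hrel, hfa', rfl⟩ := hfa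
    constructor
    · -- 0 ≤ S from the matched states
      intro i
      have e₁ := ann_elem V hf₁ (q := P₁) (e := x) h₁ i
      have h₂' : annot V w₂ = (P₂ ++ [q.1]) ++ (q.2 ++ (Q.map fun pr => pr.1 :: pr.2).flatten) := by
        rw [h₂]
        simp
      have e₂ := ann_elem V hf₂ (q := P₂) (e := q.1)
        (rest := q.2 ++ (Q.map fun pr => pr.1 :: pr.2).flatten) (by simpa using h₂) i
      obtain ⟨hl, hle⟩ := hrel
      have hle' : (x.2 i : ℤ) ≤ (q.1.2 i : ℤ) := by exact_mod_cast hle i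
      rw [e₁, e₂, hl] at hle'
      show (0:ℤ) ≤ wordδ V (P₂.map Prod.fst) i - wordδ V (P₁.map Prod.fst) i
      omega
    · -- recurse with P₁ ++ [x], P₂ ++ q.1 :: q.2
      have h₁' : annot V w₁ = (P₁ ++ [x]) ++ l₁' := by rw [h₁]; simp
      have h₂' : annot V w₂ = (P₂ ++ q.1 :: q.2) ++ (Q.map fun pr => pr.1 :: pr.2).flatten := by
        rw [h₂]; simp
      have := ih l₁' (P₁ ++ [x]) (P₂ ++ q.1 :: q.2) hfa' h₁' h₂'
      apply allS_congr V _ this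
      intro i
      obtain ⟨hl, _⟩ := hrel
      simp only [List.map_append, List.map_cons, List.map_nil]
      rw [wordδ_append, wordδ_append, wordδ_singleton, wordδ_cons, hl]
      ring
end Part3

section Part4
variable {α : Type} {d : ℕ}

theorem exists_good_pair [Finite α] (F : ℕ → List (α × (Fin d → ℕ))) :
    ∃ m n, m < n ∧ List.SublistForall₂ (rel (α := α) (d := d)) (F m) (F n) := by
  haveI h1 : IsRefl (α × (Fin d → ℕ)) (rel (α := α) (d := d)) := ⟨fun p => ⟨rfl, le_refl _⟩⟩
  haveI h2 : IsTrans (α × (Fin d → ℕ)) (rel (α := α) (d := d)) :=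
    ⟨fun p q r' hpq hqr => ⟨hpq.1.trans hqr.1, hpq.2.trans hqr.2⟩⟩
  have hα : (Set.univ : Set α).PartiallyWellOrderedOn (· = ·) :=
    Set.finite_univ.partiallyWellOrderedOn
  have hβ : (Set.univ : Set (Fin d → ℕ)).PartiallyWellOrderedOn (· ≤ ·) :=
    Set.isPWO_of_wellQuasiOrderedLE Set.univ
  have hprod := hα.prod hβ
  have hrel : (Set.univ : Set (α × (Fin d → ℕ))).PartiallyWellOrderedOn (rel (α := α) (d := d)) := by
    rw [← Set.univ_prod_univ]
    exact hprod
  haveI h3 : IsPreorder (α × (Fin d → ℕ)) (rel (α := α) (d := d)) := @IsPreorder.mk _ _ h1 h2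
  have h := Set.PartiallyWellOrderedOn.partiallyWellOrderedOn_sublistForall₂
    (rel (α := α) (d := d)) hrel
  obtain ⟨m, n, hmn, hr⟩ := h (fun n => ⟨F n, fun x _ => Set.mem_univ x⟩)
  exact ⟨m, n, hmn, hr⟩

theorem hard_direction [Finite α] (V : VAS α d) (x : Vec d)
    (hx : x ∈ LimCl (toOmega '' PostStar V)) :
    ∃ (k : ℕ) (u : Fin (k+1) → List α) (a : Fin k → α),
      Productive V u a ∧ ∀ i,
        ((∑ l : Fin (k+1), wordδ V (u l) i) ≠ 0 → x i = ⊤) ∧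
        ((∑ l : Fin (k+1), wordδ V (u l) i) = 0 →
          ∃ m : ℕ, x i = (m : ℕ∞) ∧ (m : ℤ) = V.init i + ∑ j : Fin k, V.δ (a j) i) := by
  classical
  obtain ⟨s, hmem, hconv⟩ := hx
  choose y hy hys using hmem
  choose w hwf hwv using hy
  have hsi : ∀ n i, s n i = (y n i : ℕ∞) := by
    intro n i
    rw [← hys n]
    rfl
  -- finite coordinates are eventually constant
  have haveA : ∀ i, x i ≠ ⊤ → ∃ N, ∀ n ≥ N, (y n i : ℕ∞) = x i := by
    intro i hi
    rcases hconv i with ⟨N, hN⟩ | ⟨htop, _⟩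
    · refine ⟨N, fun n hn => ?_⟩
      have h : s n i = x i := hN n hn
      rw [hsi n i] at h
      exact h
    · exact absurd htop hi
  -- infinite coordinates grow unboundedly
  have haveB : ∀ i, x i = ⊤ → ∀ B : ℕ, ∃ N, ∀ n ≥ N, B ≤ y n i := by
    intro i hi B
    rcases hconv i with ⟨N, hN⟩ | ⟨_, _, hB⟩
    · exfalso
      have h : s N i = x i := hN N (le_refl N)
      rw [hsi N i, hi] at h
      exact ENat.coe_ne_top (y N i) h
    · obtain ⟨N, hN⟩ := hB B
      refine ⟨N, fun n hn => ?_⟩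
      have h : (B : ℕ∞) ≤ s n i := hN n hn
      rw [hsi n i] at h
      exact_mod_cast h
  -- the threshold after which finite coordinates are constant
  set NA : Fin d → ℕ := fun i => if h : x i = ⊤ then 0 else (haveA i h).choose with hNA
  set N0 : ℕ := Finset.univ.sup NA with hN0
  have hN0p : ∀ n, n ≥ N0 → ∀ i, x i ≠ ⊤ → (y n i : ℕ∞) = x i := by
    intro n hn i hi
    have h1 : NA i ≤ N0 := Finset.le_sup (Finset.mem_univ i)
    have hNAi : NA i = (haveA i hi).choose := by
      simp only [hNA]
      rw [dif_neg hi]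
    exact (haveA i hi).choose_spec n (le_trans (hNAi ▸ h1) hn)
  -- one growth step
  have step : ∀ m : ℕ, ∃ n, m < n ∧ ∀ i, x i = ⊤ → y m i < y n i := by
    intro m
    set NB : Fin d → ℕ := fun i => if h : x i = ⊤ then (haveB i h (y m i + 1)).choose else 0
      with hNB
    refine ⟨max (m+1) (Finset.univ.sup NB), by omega, fun i hi => ?_⟩
    have h1 : NB i ≤ Finset.univ.sup NB := Finset.le_sup (Finset.mem_univ i)
    have hNBi : NB i = (haveB i hi (y m i + 1)).choose := by
      simp only [hNB]
      rw [dif_pos hi]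
    have h2 := (haveB i hi (y m i + 1)).choose_spec (max (m+1) (Finset.univ.sup NB))
      (le_trans (hNBi ▸ h1) (le_max_right _ _))
    omega
  -- the extracted subsequence
  set φ : ℕ → ℕ := fun k => Nat.rec N0 (fun _ prev => (step prev).choose) k with hφ
  have hφsucc : ∀ k, φ (k+1) = (step (φ k)).choose := fun k => rfl
  have hφmono : StrictMono φ := by
    apply strictMono_nat_of_lt_succ
    intro k
    rw [hφsucc]
    exact ((step (φ k)).choose_spec).1
  have hgrow : ∀ i, x i = ⊤ → StrictMono (fun k => y (φ k) i) := by
    intro i hi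
    apply strictMono_nat_of_lt_succ
    intro k
    rw [hφsucc]
    exact ((step (φ k)).choose_spec).2 i hi
  have hφ0 : ∀ k, N0 ≤ φ k := by
    intro k
    have : φ 0 = N0 := rfl
    calc N0 = φ 0 := this.symm
    _ ≤ φ k := hφmono.monotone (Nat.zero_le k)
  have hconst : ∀ k i, x i ≠ ⊤ → (y (φ k) i : ℕ∞) = x i :=
    fun k i hi => hN0p (φ k) (hφ0 k) i hi
  -- Higman's lemma
  obtain ⟨m, n, hmn, hsub⟩ := exists_good_pair (fun k => annot V (w (φ k)))
  set w₁ : List α := w (φ m) with hw₁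
  set w₂ : List α := w (φ n) with hw₂def
  have hf₁ : Fireable V V.init w₁ := hwf (φ m)
  have hf₂ : Fireable V V.init w₂ := hwf (φ n)
  have hY₁ : ∀ i, (y (φ m) i : ℤ) = V.init i + wordδ V w₁ i := hwv (φ m)
  have hY₂ : ∀ i, (y (φ n) i : ℤ) = V.init i + wordδ V w₂ i := hwv (φ n)
  have hYle : ∀ i, y (φ m) i ≤ y (φ n) i := by
    intro i
    by_cases hi : x i = ⊤
    · exact le_of_lt (hgrow i hi hmn)
    · have h1 := hconst m i hi
      have h2 := hconst n i hi
      rw [← h2] at h1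
      exact le_of_eq (Nat.cast_inj.1 h1)
  have hend : ∀ i, wordδ V w₁ i ≤ wordδ V w₂ i := by
    intro i
    have h1 := hY₁ i
    have h2 := hY₂ i
    have h3 := hYle i
    have : ((y (φ m) i : ℤ)) ≤ ((y (φ n) i : ℤ)) := by exact_mod_cast h3
    omega
  -- decompose
  obtain ⟨u0p, Q, hdec, hfa⟩ := decomp hsub
  set u0 : List α := u0p.map Prod.fst with hu0
  set L : List (α × List α) := Q.map (fun pr => (pr.1.1, pr.2.map Prod.fst)) with hL
  -- partial sums
  have hallS0 := allS_aux V hf₁ hf₂ hend Q (annot V w₁) [] u0p hfa (by simp) hdec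
  have hallS : allS V (fun i => wordδ V u0 i) L := by
    apply allS_congr V _ hallS0
    intro i
    simp [wordδ_nil, hu0]
  -- w₂ decomposes as u0 ++ bodyW L 1
  have hbody1 : bodyW L 1 = ((Q.map fun pr => pr.1 :: pr.2).flatten).map Prod.fst := by
    rw [List.map_flatten, List.map_map]
    simp only [bodyW, hL, List.map_map]
    congr 1
    apply List.map_congr_left
    intro pr _
    simp
  have hw₂eq : w₂ = u0 ++ bodyW L 1 := by
    rw [hbody1, hu0, ← List.map_append, ← hdec, annot_map_fst]
  -- productivity
  set k : ℕ := L.length with hk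
  set uu : Fin (k+1) → List α := Fin.cases u0 (fun j => (L.get j).2) with huu
  set aa : Fin k → α := fun j => (L.get j).1 with haa
  have hprod : Productive V uu aa := by
    apply productive_of_list V u0 L _ hallS
    rw [fireable_iff_iFire, flatten_replicate_one, ← hw₂eq, ← fireable_iff_iFire]
    exact hf₂
  refine ⟨k, uu, aa, hprod, ?_⟩
  -- the letters of the short word
  have hklen : k = w₁.length := by
    rw [hk, hL, List.length_map, hfa.length_eq.symm]
    simp [annot, List.length_ofFn]
  have haaget : ∀ j : Fin k, aa j = w₁.get (Fin.cast hklen j) := by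
    intro j
    have hj2 : (j : ℕ) < Q.length := by
      rw [← List.length_map (as := Q) (fun pr => (pr.1.1, pr.2.map Prod.fst)), ← hL]
      exact j.isLt
    have hj1 : (j : ℕ) < (annot V w₁).length := by
      rw [hfa.length_eq]
      exact hj2
    have hr := List.forall₂_iff_get.1 hfa
    have hrel := hr.2 j hj1 hj2
    have h1 : aa j = (Q.get ⟨j, hj2⟩).1.1 := by
      simp only [haa, hL]
      simp [hL, List.get_eq_getElem, List.getElem_map]
    rw [h1, ← hrel.1]
    have : (annot V w₁).get ⟨j, hj1⟩ =
        (w₁.get ⟨j, by simpa [annot, List.length_ofFn] using hj1⟩, post V w₁ j) := by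
      simp only [annot]
      rw [List.get_eq_getElem, List.getElem_ofFn]
    rw [this]
    rfl
  have hsuma : ∀ i, (∑ j : Fin k, V.δ (aa j) i) = wordδ V w₁ i := by
    intro i
    rw [wordδ_eq_sum_get, ← Fin.sum_congr' (fun j : Fin w₁.length => V.δ (w₁.get j) i) hklen]
    apply Finset.sum_congr rfl
    intro j _
    rw [haaget j]
  -- total displacement of the loops
  have hT : ∀ i, (∑ l : Fin (k+1), wordδ V (uu l) i) = wordδ V w₂ i - wordδ V w₁ i := by
    intro i
    have h1 := wordδ_iterWord V uu aa 1 i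
    rw [iterWord_eq_list, flatten_replicate_one, ← hw₂eq] at h1
    rw [hsuma i] at h1
    push_cast at h1
    omega
  intro i
  constructor
  · intro hTi
    by_contra hi
    have h1 := hconst m i hi
    have h2 := hconst n i hi
    rw [← h2] at h1
    have h3 : y (φ m) i = y (φ n) i := Nat.cast_inj.1 h1
    rw [hT i] at hTi
    have e1 := hY₁ i
    have e2 := hY₂ i
    rw [h3] at e1
    omega
  · intro hTi
    have hi : x i ≠ ⊤ := by
      intro hi
      have := hgrow i hi hmn
      rw [hT i] at hTi
      have e1 := hY₁ i
      have e2 := hY₂ i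
      have : ((y (φ m) i : ℤ)) < ((y (φ n) i : ℤ)) := by exact_mod_cast this
      omega
    refine ⟨y (φ n) i, (hconst n i hi).symm, ?_⟩
    have e2 := hY₂ i
    rw [hsuma i]
    rw [hT i] at hTi
    omega

end Part4


section Part5
variable {α : Type} {d : ℕ}

theorem easy_direction (V : VAS α d) (x : Vec d) {k : ℕ}
    (u : Fin (k+1) → List α) (a : Fin k → α) (hprod : Productive V u a)
    (hcond : ∀ i,
      ((∑ l : Fin (k+1), wordδ V (u l) i) ≠ 0 → x i = ⊤) ∧
      ((∑ l : Fin (k+1), wordδ V (u l) i) = 0 →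
        ∃ m : ℕ, x i = (m : ℕ∞) ∧ (m : ℤ) = V.init i + ∑ j : Fin k, V.δ (a j) i)) :
    x ∈ LimCl (toOmega '' PostStar V) := by
  set D : Fin d → ℤ := fun i => ∑ l : Fin (k+1), wordδ V (u l) i with hD
  set A : Fin d → ℤ := fun i => ∑ j : Fin k, V.δ (a j) i with hA
  set Y : ℕ → Fin d → ℕ :=
    fun n i => ((V.init i : ℤ) + wordδ V (iterWord u a (n+1)) i).toNat with hY
  have hfire : ∀ n : ℕ, Fireable V V.init (iterWord u a (n+1)) :=
    fun n => hprod (n+1) (by omega)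
  have hval : ∀ n i, 0 ≤ (V.init i : ℤ) + wordδ V (iterWord u a (n+1)) i :=
    fun n i => hfire n (iterWord u a (n+1)) (List.prefix_refl _) i
  have hYval : ∀ n i, (Y n i : ℤ) = (V.init i : ℤ) + wordδ V (iterWord u a (n+1)) i :=
    fun n i => Int.toNat_of_nonneg (hval n i)
  have hiter : ∀ n i, wordδ V (iterWord u a (n+1)) i = ((n:ℤ)+1) * D i + A i := by
    intro n i
    rw [wordδ_iterWord]
    push_cast
    ring
  have hmem : ∀ n, toOmega (Y n) ∈ toOmega '' PostStar V := by
    intro n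
    exact ⟨Y n, ⟨iterWord u a (n+1), hfire n, fun i => hYval n i⟩, rfl⟩
  -- positivity of D where nonzero
  have hDpos : ∀ i, D i ≠ 0 → 1 ≤ D i := by
    intro i hne
    by_contra hlt
    push_neg at hlt
    have hD1 : D i ≤ -1 := by omega
    set n : ℕ := ((V.init i : ℤ) + A i).toNat with hn
    have h1 : (V.init i : ℤ) + A i ≤ n := Int.self_le_toNat _
    have h2 := hval n i
    rw [hiter n i] at h2
    have h3 : ((n:ℤ)+1) * D i ≤ ((n:ℤ)+1) * (-1) :=
      mul_le_mul_of_nonneg_left hD1 (by positivity)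
    omega
  refine ⟨fun n => toOmega (Y n), hmem, ?_⟩
  intro i
  rcases hcond i with ⟨hne, heq⟩
  by_cases hDi : D i = 0
  · obtain ⟨m, hxm, hmval⟩ := heq hDi
    left
    refine ⟨0, fun n _ => ?_⟩
    have h1 : Y n i = m := by
      have : (Y n i : ℤ) = (m : ℤ) := by
        rw [hYval n i, hiter n i, hDi]
        rw [hmval]
        ring
      exact_mod_cast this
    show ((Y n i : ℕ∞)) = x i
    rw [h1, hxm]
  · right
    refine ⟨hne hDi, ?_, ?_⟩
    · have hset : {n : ℕ | (fun n => toOmega (Y n) i) n ≠ ⊤} = Set.univ :=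
        Set.eq_univ_of_forall (fun n => ENat.coe_ne_top (Y n i))
      rw [hset]
      exact Set.infinite_univ
    · intro B
      set c : ℤ := (V.init i : ℤ) + A i with hc
      refine ⟨B + (-c).toNat, fun n hn => ?_⟩
      have hD1 : 1 ≤ D i := hDpos i hDi
      have hv0 := hval n i
      have hgoal : B ≤ Y n i := by
        rw [hY]
        rw [Int.le_toNat hv0]
        rw [hiter n i]
        have hmul : ((n:ℤ)+1) * 1 ≤ ((n:ℤ)+1) * D i :=
          mul_le_mul_of_nonneg_left hD1 (by positivity)
        have htn : -c ≤ ((-c).toNat : ℤ) := Int.self_le_toNat _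
        have hncast : ((B + (-c).toNat : ℕ) : ℤ) ≤ (n : ℤ) := by exact_mod_cast hn
        push_cast at hncast ⊢
        omega
      show (B : ℕ∞) ≤ ((Y n i : ℕ∞))
      exact_mod_cast hgoal

end Part5

/-- The limit closure of the reachability set of a VAS equals the set of vectors
`x_in + δ(v) + ω·δ(π)` for `v ∈ A*` and `π` productive for `v`:
componentwise, the vector equals `ω` where `δ(π)` is nonzero (indeed positive),
and `x_in + δ(v)` where `δ(π)` is zero. -/
theorem stmt_8 {α : Type} [Finite α] {d : ℕ} (V : VAS α d) :
    LimCl (toOmega '' PostStar V) =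
      {x : Vec d | ∃ (k : ℕ) (u : Fin (k+1) → List α) (a : Fin k → α),
        Productive V u a ∧ ∀ i,
          ((∑ l : Fin (k+1), wordδ V (u l) i) ≠ 0 → x i = ⊤) ∧
          ((∑ l : Fin (k+1), wordδ V (u l) i) = 0 →
            ∃ m : ℕ, x i = (m : ℕ∞) ∧ (m : ℤ) = V.init i + ∑ j : Fin k, V.δ (a j) i)} := by
  ext x
  constructor
  · intro h
    exact hard_direction V x h
  · rintro ⟨k, u, a, hprod, hcond⟩
    exact easy_direction V x u a hprod hcond
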